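/- In the lattice of almost-interval partitions Ĩ(n) with n ≥ 3, let σ = {{1,2},{3},...,{n}}. The partitions π ∈ Ĩ(n) with π ∨ σ = 1_n are exactly the three partitions 1_n, {{1},{2,...,n}}, and {{2},{1,3,...,n}}. -/
import Mathlib


attribute [local instance] Classical.propDecidable

instance {α : Type*} [Finite α] : Finite (Setoid α) :=
  Finite.of_injective (fun s : Setoid α => s.r)
    (fun a b h => Setoid.ext fun x y => by rw [show a.r = b.r from h])

noncomputable instance {α : Type*} [Finite α] : Fintype (Setoid α) :=
  Fintype.ofFinite _

/-- A set partition of `{0,...,n-1}` (encoded as a `Setoid (Fin n)`) is an *interval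
partition* iff each of its blocks consists of consecutive integers. -/
def IsIntervalSetoid {n : ℕ} (s : Setoid (Fin n)) : Prop :=
  ∀ a b c : Fin n, a ≤ b → b ≤ c → s.r a c → s.r a b

/-- A set partition is *non-crossing* iff there are no `a < b < c < d` with `a, c` in one
block and `b, d` in a different block. -/
def IsNoncrossing {n : ℕ} (s : Setoid (Fin n)) : Prop :=
  ∀ a b c d : Fin n, a < b → b < c → c < d → s.r a c → s.r b d → s.r a b

/-- A subset of `Fin n` is a *cyclic interval* iff it consists of cyclically consecutive
residues mod `n`. -/
def IsCyclicInterval {n : ℕ} (B : Set (Fin n)) : Prop :=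
  ∃ (b : Fin n) (k : ℕ), B = {x | ∃ i ≤ k, x = ((finRotate n) ^ i) b}

/-- A set partition of `Fin n` is a *cyclic-interval partition* iff all of its blocks are
cyclic intervals. -/
def IsCyclicIntervalSetoid {n : ℕ} (s : Setoid (Fin n)) : Prop :=
  ∀ a : Fin n, IsCyclicInterval {x | s.r a x}

/-- The singleton-insertion map `Ψ^n_r` : it inserts a singleton block at position `r`,
shifting the rest of the partition. -/
def insertSingleton {n : ℕ} (r : Fin (n + 1)) (s : Setoid (Fin n)) : Setoid (Fin (n + 1)) where
  r a b := (a = r ∧ b = r) ∨ ∃ i j : Fin n, a = r.succAbove i ∧ b = r.succAbove j ∧ s.r i j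
  iseqv := by
    constructor
    · intro a
      rcases eq_or_ne a r with h | h
      · exact Or.inl ⟨h, h⟩
      · obtain ⟨i, hi⟩ := Fin.exists_succAbove_eq h
        exact Or.inr ⟨i, i, hi.symm, hi.symm, s.refl i⟩
    · rintro a b (⟨h1, h2⟩ | ⟨i, j, h1, h2, h3⟩)
      · exact Or.inl ⟨h2, h1⟩
      · exact Or.inr ⟨j, i, h2, h1, s.symm h3⟩
    · rintro a b c (⟨h1, h2⟩ | ⟨i, j, h1, h2, h3⟩) (⟨g1, g2⟩ | ⟨k, l, g1, g2, g3⟩)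
      · exact Or.inl ⟨h1, g2⟩
      · exact absurd (g1.symm.trans h2) (Fin.succAbove_ne r k)
      · exact absurd (h2.symm.trans g1) (Fin.succAbove_ne r j)
      · have hjk : j = k := Fin.succAbove_right_injective (h2.symm.trans g1)
        exact Or.inr ⟨i, l, h1, g2, s.trans h3 (hjk ▸ g3)⟩

/-- The elements of `Fin n` that do NOT form singleton blocks of `s`. -/
noncomputable def nonSingletons {n : ℕ} (s : Setoid (Fin n)) : Finset (Fin n) :=
  Finset.univ.filter fun x => ∃ y, y ≠ x ∧ s.r x y

/-- `RS s` removes all singleton blocks of the partition `s` and relabels the remaining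
elements in an order-preserving way. -/
noncomputable def RS {n : ℕ} (s : Setoid (Fin n)) : Setoid (Fin (nonSingletons s).card) where
  r i j := s.r ((nonSingletons s).orderIsoOfFin rfl i).1 ((nonSingletons s).orderIsoOfFin rfl j).1
  iseqv := ⟨fun i => s.refl _, fun h => s.symm h, fun h h' => s.trans h h'⟩

/-- An *almost-interval* partition: non-crossing, and removing the singleton blocks yields
an interval partition. -/
def IsAlmostInterval {n : ℕ} (s : Setoid (Fin n)) : Prop :=
  IsNoncrossing s ∧ IsIntervalSetoid (RS s)

/-- A *cyclic almost-interval* partition: non-crossing, and removing the singleton blocks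
yields a cyclic-interval partition. -/
def IsAlmostCyclicInterval {n : ℕ} (s : Setoid (Fin n)) : Prop :=
  IsNoncrossing s ∧ IsCyclicIntervalSetoid (RS s)

/-- The number of crossings of a set partition: the number of quadruples `a < b < c < d`
with `a ~ c`, `b ~ d` lying in two different blocks. -/
noncomputable def crossNum {n : ℕ} (s : Setoid (Fin n)) : ℕ :=
  Finset.card (Finset.univ.filter fun p : Fin n × Fin n × Fin n × Fin n =>
    p.1 < p.2.1 ∧ p.2.1 < p.2.2.1 ∧ p.2.2.1 < p.2.2.2 ∧
      s.r p.1 p.2.2.1 ∧ s.r p.2.1 p.2.2.2 ∧ ¬ s.r p.1 p.2.1)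

/-- `{r}` is a singleton block of the partition `s`. -/
def IsSingletonBlock {n : ℕ} (r : Fin n) (s : Setoid (Fin n)) : Prop :=
  ∀ y, s.r r y → y = r

/-- The partition `{{1,2},{3},...,{n}}` (in `Fin n` indexing: block `{0,1}`, rest singletons). -/
def pairBlockFirst (n : ℕ) : Setoid (Fin n) where
  r x y := x = y ∨ ((x : ℕ) < 2 ∧ (y : ℕ) < 2)
  iseqv := by
    refine ⟨fun x => Or.inl rfl, ?_, ?_⟩
    · rintro x y (rfl | h)
      · exact Or.inl rfl
      · exact Or.inr ⟨h.2, h.1⟩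
    · rintro x y z (rfl | h) h'
      · exact h'
      · rcases h' with rfl | h'
        · exact Or.inr h
        · exact Or.inr ⟨h.1, h'.2⟩

/-- The partition of `Fin n` whose blocks are the singleton `{k}` and its complement. -/
def singletonAt {n : ℕ} (k : Fin n) : Setoid (Fin n) where
  r x y := x = y ∨ (x ≠ k ∧ y ≠ k)
  iseqv := by
    refine ⟨fun x => Or.inl rfl, ?_, ?_⟩
    · rintro x y (rfl | h)
      · exact Or.inl rfl
      · exact Or.inr ⟨h.2, h.1⟩
    · rintro x y z (rfl | h) h'
      · exact h'
      · rcases h' with rfl | h'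
        · exact Or.inr h
        · exact Or.inr ⟨h.1, h'.2⟩

/-- The order embedding `Fin (n - m) → Fin n` that skips the `m` positions `j, ..., j+m-1`. -/
def skipEmb {n : ℕ} (m j : ℕ) (h : j + m ≤ n) (i : Fin (n - m)) : Fin n :=
  ⟨if (i : ℕ) < j then (i : ℕ) else (i : ℕ) + m, by have := i.isLt; split <;> omega⟩

section Aux

variable {n : ℕ}

lemma mem_nonSingletons_iff {s : Setoid (Fin n)} {x : Fin n} :
    x ∈ nonSingletons s ↔ ∃ y, y ≠ x ∧ s.r x y := by
  simp [nonSingletons]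

lemma orderIsoOfFin_mem (s : Setoid (Fin n)) (i : Fin (nonSingletons s).card) :
    (((nonSingletons s).orderIsoOfFin rfl i) : Fin n) ∈ nonSingletons s :=
  ((nonSingletons s).orderIsoOfFin rfl i).2

/-- `singletonAt k` is almost-interval. -/
lemma singletonAt_almostInterval (k : Fin n) : IsAlmostInterval (singletonAt k) := by
  constructor
  · rintro a b c d hab hbc hcd (rfl | ⟨hak, hck⟩) h2
    · exact absurd rfl (ne_of_lt (hab.trans hbc))
    · rcases h2 with rfl | ⟨hbk, hdk⟩
      · exact absurd rfl (ne_of_lt (hbc.trans hcd))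
      · exact Or.inr ⟨hak, hbk⟩
  · intro i j l _ _ _
    have hk : k ∉ nonSingletons (singletonAt k) := by
      rw [mem_nonSingletons_iff]
      rintro ⟨y, hy, rfl | ⟨h, _⟩⟩
      · exact hy rfl
      · exact h rfl
    refine Or.inr ⟨?_, ?_⟩
    · intro h
      have := orderIsoOfFin_mem (singletonAt k) i
      rw [h] at this
      exact hk this
    · intro h
      have := orderIsoOfFin_mem (singletonAt k) j
      rw [h] at this
      exact hk this

/-- The two-block interval partition cutting at `m`. -/
def cutAt (n m : ℕ) : Setoid (Fin n) where
  r x y := ((x : ℕ) < m ↔ (y : ℕ) < m)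
  iseqv := ⟨fun _ => Iff.rfl, Iff.symm, Iff.trans⟩

lemma cutAt_almostInterval (m : ℕ) : IsAlmostInterval (cutAt n m) := by
  constructor
  · intro a b c d hab hbc hcd h1 h2
    have hab' := hab
    rw [Fin.lt_def] at hab hbc hcd
    show (a : ℕ) < m ↔ (b : ℕ) < m
    change ((a : ℕ) < m ↔ (c : ℕ) < m) at h1
    change ((b : ℕ) < m ↔ (d : ℕ) < m) at h2
    omega
  · intro i j l hij hjl h
    set e := (nonSingletons (cutAt n m)).orderIsoOfFin rfl with he
    have h1 : ((e i : Fin n) : ℕ) ≤ ((e j : Fin n) : ℕ) := by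
      exact_mod_cast Subtype.coe_le_coe.mpr (e.monotone hij)
    have h2 : ((e j : Fin n) : ℕ) ≤ ((e l : Fin n) : ℕ) := by
      exact_mod_cast Subtype.coe_le_coe.mpr (e.monotone hjl)
    change (((e i : Fin n) : ℕ) < m ↔ ((e l : Fin n) : ℕ) < m) at h
    change (((e i : Fin n) : ℕ) < m ↔ ((e j : Fin n) : ℕ) < m)
    omega

/-- Interval property on the non-singleton elements. -/
lemma interval_of_AI {π : Setoid (Fin n)} (h : IsAlmostInterval π)
    {x y z : Fin n} (hxy : x ≤ y) (hyz : y ≤ z)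
    (hx : x ∈ nonSingletons π) (hy : y ∈ nonSingletons π) (hz : z ∈ nonSingletons π)
    (hxz : π.r x z) : π.r x y := by
  set e := (nonSingletons π).orderIsoOfFin rfl with he
  set i := e.symm ⟨x, hx⟩ with hi
  set j := e.symm ⟨y, hy⟩ with hj
  set l := e.symm ⟨z, hz⟩ with hl
  have hex : (e i : Fin n) = x := by rw [hi, e.apply_symm_apply]
  have hey : (e j : Fin n) = y := by rw [hj, e.apply_symm_apply]
  have hez : (e l : Fin n) = z := by rw [hl, e.apply_symm_apply]
  have hij : i ≤ j := e.symm.monotone (Subtype.mk_le_mk.mpr hxy)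
  have hjl : j ≤ l := e.symm.monotone (Subtype.mk_le_mk.mpr hyz)
  have hRS : (RS π).r i l := by
    show π.r (e i : Fin n) (e l : Fin n)
    rw [hex, hez]; exact hxz
  have := h.2 i j l hij hjl hRS
  change π.r (e i : Fin n) (e j : Fin n) at this
  rwa [hex, hey] at this

end Aux


lemma pairBlock_le_cut {n m : ℕ} (hm : 2 ≤ m) : pairBlockFirst n ≤ cutAt n m := by
  rintro x y (rfl | ⟨hx, hy⟩)
  · exact Iff.rfl
  · show (x : ℕ) < m ↔ (y : ℕ) < m
    omega

lemma cut_not_top {n : ℕ} {m : ℕ} (hm2 : 1 ≤ m) (hmn : m < n) :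
    cutAt n m ≠ ⊤ := by
  intro h
  have : (cutAt n m).r ⟨0, by omega⟩ ⟨m, hmn⟩ := by rw [h]; exact trivial
  change (0 < m ↔ m < m) at this
  omega

theorem almostInterval_join_with_pairBlock_eq_top (n : ℕ) (hn : 3 ≤ n)
    (π : Setoid (Fin n)) (hπ : IsAlmostInterval π) :
    (∀ τ : Setoid (Fin n), IsAlmostInterval τ → π ≤ τ → pairBlockFirst n ≤ τ → τ = ⊤) ↔
      (π = ⊤ ∨ π = singletonAt (⟨0, by omega⟩ : Fin n) ∨
        π = singletonAt (⟨1, by omega⟩ : Fin n)) := by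
  have hlt0 : 0 < n := by omega
  have hlt1 : 1 < n := by omega
  have hlt2 : 2 < n := by omega
  constructor
  · intro H
    -- Step A: every k with 2 ≤ k is non-singleton
    have stepA : ∀ k : Fin n, 2 ≤ (k : ℕ) → ∃ y, y ≠ k ∧ π.r k y := by
      intro k hk
      by_contra hno
      push_neg at hno
      have hle : π ≤ singletonAt k := by
        intro x y hxy
        rcases eq_or_ne x y with rfl | hxyne
        · exact Or.inl rfl
        · refine Or.inr ⟨?_, ?_⟩
          · rintro rfl
            exact hno y (fun h => hxyne h.symm) hxy
          · rintro rfl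
            exact hno x hxyne (π.symm hxy)
      have hσ : pairBlockFirst n ≤ singletonAt k := by
        rintro x y (rfl | ⟨hx2, hy2⟩)
        · exact Or.inl rfl
        · exact Or.inr ⟨fun h => by subst h; omega, fun h => by subst h; omega⟩
      have heq := H (singletonAt k) (singletonAt_almostInterval k) hle hσ
      have hk0 : (singletonAt k).r k ⟨0, hlt0⟩ := by rw [heq]; exact trivial
      rcases hk0 with h | ⟨h, _⟩
      · have : (k : ℕ) = 0 := congrArg Fin.val h
        omega
      · exact h rfl
    have hns : ∀ k : Fin n, 2 ≤ (k : ℕ) → k ∈ nonSingletons π := fun k hk =>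
      mem_nonSingletons_iff.mpr (stepA k hk)
    -- Step B: no separating cut exists
    have hcut : ∀ m : ℕ, 2 ≤ m → m < n →
        (∀ x y : Fin n, π.r x y → ((x : ℕ) < m ↔ (y : ℕ) < m)) → False := by
      intro m hm2 hmn hsep
      have hle : π ≤ cutAt n m := fun x y h => hsep x y h
      exact cut_not_top (by omega) hmn (H _ (cutAt_almostInterval m) hle (pairBlock_le_cut hm2))
    -- Step C: all elements ≥ 2 are in one block
    have hC : ∀ a b : Fin n, 2 ≤ (a : ℕ) → (a : ℕ) < (b : ℕ) → π.r a b := by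
      intro a b ha2 hab
      by_contra hnab
      have hP : ∃ t, ∃ h : t < n, (a : ℕ) < t ∧ ¬ π.r a ⟨t, h⟩ := ⟨b.1, b.2, hab, hnab⟩
      obtain ⟨hmn, ham, hnam⟩ := Nat.find_spec hP
      have hm2 : 2 ≤ Nat.find hP := by omega
      have hmin : ∀ t (h : t < n), (a : ℕ) < t → t < Nat.find hP → π.r a ⟨t, h⟩ := by
        intro t h hat htm
        by_contra hc
        exact Nat.find_min hP htm ⟨h, hat, hc⟩
      have hstar : ∀ y : Fin n, Nat.find hP ≤ (y : ℕ) → ¬ π.r a y := by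
        intro y hy hay
        apply hnam
        have hymem : y ∈ nonSingletons π :=
          mem_nonSingletons_iff.mpr ⟨a, Fin.ne_of_val_ne (by omega), π.symm hay⟩
        exact interval_of_AI hπ (Fin.le_def.mpr (le_of_lt ham)) (Fin.le_def.mpr hy)
          (hns a ha2) (hns ⟨Nat.find hP, hmn⟩ hm2) hymem hay
      refine hcut (Nat.find hP) hm2 hmn ?_
      intro x y hxy
      have key : ∀ u v : Fin n, π.r u v → (u : ℕ) < Nat.find hP → Nat.find hP ≤ (v : ℕ) → False := by
        intro u v huv hum hmv
        have huns : u ∈ nonSingletons π :=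
          mem_nonSingletons_iff.mpr ⟨v, Fin.ne_of_val_ne (by omega), huv⟩
        have hvns : v ∈ nonSingletons π :=
          mem_nonSingletons_iff.mpr ⟨u, Fin.ne_of_val_ne (by omega), π.symm huv⟩
        rcases le_or_gt (u : ℕ) (a : ℕ) with h | h
        · have hua : π.r u a :=
            interval_of_AI hπ (Fin.le_def.mpr h) (Fin.le_def.mpr (by omega))
              huns (hns a ha2) hvns huv
          exact hstar v hmv (π.trans (π.symm hua) huv)
        · have hau : π.r a u := hmin u.1 u.2 h hum
          exact hstar v hmv (π.trans hau huv)
      constructor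
      · intro h1
        by_contra h2
        exact key x y hxy h1 (by omega)
      · intro h1
        by_contra h2
        exact key y x (π.symm hxy) h1 (by omega)
    have hbig : ∀ a b : Fin n, 2 ≤ (a : ℕ) → 2 ≤ (b : ℕ) → π.r a b := by
      intro a b ha hb
      rcases lt_trichotomy (a : ℕ) (b : ℕ) with h | h | h
      · exact hC a b ha h
      · have hab : a = b := Fin.ext h
        rw [hab]
      · exact π.symm (hC b a hb h)
    by_cases h02 : π.r ⟨0, hlt0⟩ ⟨2, hlt2⟩ <;> by_cases h12 : π.r ⟨1, hlt1⟩ ⟨2, hlt2⟩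
    · -- π = ⊤
      left
      rw [Setoid.eq_top_iff]
      have hall : ∀ x : Fin n, π.r x ⟨2, hlt2⟩ := by
        intro x
        have hx : (x : ℕ) = 0 ∨ (x : ℕ) = 1 ∨ 2 ≤ (x : ℕ) := by omega
        rcases hx with h | h | h
        · rw [show x = ⟨0, hlt0⟩ from Fin.ext h]
          exact h02
        · rw [show x = ⟨1, hlt1⟩ from Fin.ext h]
          exact h12
        · exact hbig x ⟨2, hlt2⟩ h (le_refl 2)
      intro x y
      exact π.trans (hall x) (π.symm (hall y))
    · -- 1 is a singleton : π = singletonAt 1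
      right; right
      have hto2 : ∀ x : Fin n, x ≠ ⟨1, hlt1⟩ → π.r x ⟨2, hlt2⟩ := by
        intro x hx1
        have hne : (x : ℕ) ≠ 1 := fun h => hx1 (Fin.ext h)
        have hx : (x : ℕ) = 0 ∨ 2 ≤ (x : ℕ) := by omega
        rcases hx with h | h
        · rw [show x = ⟨0, hlt0⟩ from Fin.ext h]
          exact h02
        · exact hbig x ⟨2, hlt2⟩ h (le_refl 2)
      have hsing1 : ∀ y : Fin n, π.r ⟨1, hlt1⟩ y → y = ⟨1, hlt1⟩ := by
        intro y hy
        by_contra hne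
        exact h12 (π.trans hy (hto2 y hne))
      apply Setoid.ext
      intro x y
      constructor
      · intro hxy
        rcases eq_or_ne x y with rfl | hne
        · exact Or.inl rfl
        · refine Or.inr ⟨?_, ?_⟩
          · rintro rfl
            exact hne (hsing1 y hxy).symm
          · rintro rfl
            exact hne (hsing1 x (π.symm hxy))
      · rintro (rfl | ⟨hx1, hy1⟩)
        · exact π.refl x
        · exact π.trans (hto2 x hx1) (π.symm (hto2 y hy1))
    · -- 0 is a singleton : π = singletonAt 0
      right; left
      have hto2 : ∀ x : Fin n, x ≠ ⟨0, hlt0⟩ → π.r x ⟨2, hlt2⟩ := by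
        intro x hx0
        have hne : (x : ℕ) ≠ 0 := fun h => hx0 (Fin.ext h)
        have hx : (x : ℕ) = 1 ∨ 2 ≤ (x : ℕ) := by omega
        rcases hx with h | h
        · rw [show x = ⟨1, hlt1⟩ from Fin.ext h]
          exact h12
        · exact hbig x ⟨2, hlt2⟩ h (le_refl 2)
      have hsing0 : ∀ y : Fin n, π.r ⟨0, hlt0⟩ y → y = ⟨0, hlt0⟩ := by
        intro y hy
        by_contra hne
        exact h02 (π.trans hy (hto2 y hne))
      apply Setoid.ext
      intro x y
      constructor
      · intro hxy
        rcases eq_or_ne x y with rfl | hne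
        · exact Or.inl rfl
        · refine Or.inr ⟨?_, ?_⟩
          · rintro rfl
            exact hne (hsing0 y hxy).symm
          · rintro rfl
            exact hne (hsing0 x (π.symm hxy))
      · rintro (rfl | ⟨hx0, hy0⟩)
        · exact π.refl x
        · exact π.trans (hto2 x hx0) (π.symm (hto2 y hy0))
    · -- neither: cut at 2 separates, contradiction
      exfalso
      refine hcut 2 (le_refl 2) hlt2 ?_
      intro x y hxy
      have key : ∀ u v : Fin n, π.r u v → (u : ℕ) < 2 → 2 ≤ (v : ℕ) → False := by
        intro u v huv hu hv
        have h2ns : (⟨2, hlt2⟩ : Fin n) ∈ nonSingletons π := hns _ (le_refl 2)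
        have huns : u ∈ nonSingletons π :=
          mem_nonSingletons_iff.mpr ⟨v, Fin.ne_of_val_ne (by omega), huv⟩
        have hvns : v ∈ nonSingletons π :=
          mem_nonSingletons_iff.mpr ⟨u, Fin.ne_of_val_ne (by omega), π.symm huv⟩
        have hu2 : π.r u ⟨2, hlt2⟩ :=
          interval_of_AI hπ (Fin.le_def.mpr (le_of_lt hu)) (Fin.le_def.mpr hv)
            huns h2ns hvns huv
        have hcases : (u : ℕ) = 0 ∨ (u : ℕ) = 1 := by omega
        rcases hcases with h | h
        · exact h02 ((show u = ⟨0, hlt0⟩ from Fin.ext h) ▸ hu2)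
        · exact h12 ((show u = ⟨1, hlt1⟩ from Fin.ext h) ▸ hu2)
      constructor
      · intro h1
        by_contra h2
        exact key x y hxy h1 (by omega)
      · intro h1
        by_contra h2
        exact key y x (π.symm hxy) h1 (by omega)
  · rintro (rfl | rfl | rfl)
    · intro τ _ hπτ _
      exact top_le_iff.mp hπτ
    · intro τ _ hπτ hστ
      rw [Setoid.eq_top_iff]
      have h01 : τ.r ⟨0, hlt0⟩ ⟨1, hlt1⟩ :=
        hστ (Or.inr ⟨by show (0:ℕ) < 2; omega, by show (1:ℕ) < 2; omega⟩)
      have hall : ∀ x : Fin n, τ.r x ⟨0, hlt0⟩ := by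
        intro x
        rcases eq_or_ne x ⟨0, hlt0⟩ with rfl | hx
        · exact τ.refl _
        · have h1 : τ.r x ⟨1, hlt1⟩ :=
            hπτ (Or.inr ⟨hx, Fin.ne_of_val_ne (by show (1:ℕ) ≠ 0; omega)⟩)
          exact τ.trans h1 (τ.symm h01)
      intro x y
      exact τ.trans (hall x) (τ.symm (hall y))
    · intro τ _ hπτ hστ
      rw [Setoid.eq_top_iff]
      have h01 : τ.r ⟨0, hlt0⟩ ⟨1, hlt1⟩ :=
        hστ (Or.inr ⟨by show (0:ℕ) < 2; omega, by show (1:ℕ) < 2; omega⟩)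
      have hall : ∀ x : Fin n, τ.r x ⟨1, hlt1⟩ := by
        intro x
        rcases eq_or_ne x ⟨1, hlt1⟩ with rfl | hx
        · exact τ.refl _
        · have h1 : τ.r x ⟨0, hlt0⟩ :=
            hπτ (Or.inr ⟨hx, Fin.ne_of_val_ne (by show (0:ℕ) ≠ 1; omega)⟩)
          exact τ.trans h1 h01
      intro x y
      exact τ.trans (hall x) (τ.symm (hall y))
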